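/- arXiv:math/0604026 — 3 statements merged into one kernel-verified Lean document; each statement's English description precedes it below -/
import Mathlib

section
/- Let 0 < λ < 1 and 0 < k < 1 satisfy 1−k² < (1−λ²)/λ², and let N ≥ 0 be an integer. Define the remainder R_{1,N}(λ,k) = F(λ,k) − (1/2)·ln((1+λ)/(1−λ))·Σ_{j=0}^N ((1/2)_j)²/(j!)²·(1−k²)^j − (1/(2λ))·Σ_{j=1}^N Σ_{n=0}^{j−1} (−1)^{j+n}·((1/2)_j (1/2−j)_n)/(j·j!·(1−j)_n)·(1−k²)^j·(λ²/(1−λ²))^{j−n}. Then |R_{1,N}(λ,k)| ≤ (λ·(1/2)_{N+1})/(2(N+1)·(N+1)!) · [λ²(1−k²)/(1−λ²)]^{N+1}. -/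
open Real Finset

noncomputable def poch (a : ℝ) (n : ℕ) : ℝ := ∏ i ∈ Finset.range n, (a + i)

lemma poch_zero (a : ℝ) : poch a 0 = 1 := by simp [poch]

lemma poch_succ (a : ℝ) (n : ℕ) : poch a (n + 1) = poch a n * (a + n) := by
  simp [poch, Finset.prod_range_succ]

lemma poch_succ' (a : ℝ) (n : ℕ) : poch a (n + 1) = a * poch (a + 1) n := by
  rw [poch, Finset.prod_range_succ', poch, mul_comm]
  push_cast
  ring_nf

lemma poch_pos {a : ℝ} (ha : 0 < a) (n : ℕ) : 0 < poch a n := by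
  refine Finset.prod_pos fun i _ => by positivity

lemma poch_ne_zero_of_neg_int {j : ℕ} {n : ℕ} (h : n < j) : poch (1 - (j:ℝ)) n ≠ 0 := by
  refine Finset.prod_ne_zero_iff.2 fun i hi => ?_
  simp only [Finset.mem_range] at hi
  have h2 : i + 1 < j := lt_of_le_of_lt hi h
  have h3 : (1:ℝ) + i < j := by
    have := (Nat.cast_lt (α := ℝ)).2 h2
    push_cast at this
    linarith
  intro hz
  nlinarith

lemma hasDerivAt_one_add_rpow (α t : ℝ) (ht : 0 ≤ t) :
    HasDerivAt (fun s : ℝ => (1 + s) ^ (-α)) (-α * (1 + t) ^ (-α - 1)) t := by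
  have h1 : (1:ℝ) + t ≠ 0 := by linarith
  have := (Real.hasDerivAt_rpow_const (x := 1 + t) (p := -α) (Or.inl h1)).comp t
    ((hasDerivAt_id t).const_add 1)
  simpa [mul_comm, Function.comp_def] using this

lemma continuousOn_one_add_rpow (p : ℝ) {a b : ℝ} (ha : 0 ≤ a) (hb : 0 ≤ b) :
    ContinuousOn (fun s : ℝ => (1 + s) ^ p) (Set.uIcc a b) := by
  apply ContinuousOn.rpow_const
  · exact (continuous_const.add continuous_id).continuousOn
  · intro s hs
    left
    have h1 : min a b ≤ s := hs.1
    have h2 : 0 ≤ min a b := le_min ha hb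
    intro hz
    nlinarith

lemma binom_rem (N : ℕ) : ∀ (α : ℝ), 0 < α → ∀ x : ℝ, 0 ≤ x →
    |(1 + x) ^ (-α) - ∑ j ∈ Finset.range (N + 1),
        (-1) ^ j * poch α j / (Nat.factorial j : ℝ) * x ^ j|
      ≤ poch α (N + 1) / (Nat.factorial (N + 1) : ℝ) * x ^ (N + 1) := by
  induction N with
  | zero =>
    intro α hα x hx
    have key : (1 + x) ^ (-α) - 1 = ∫ s in (0:ℝ)..x, -α * (1 + s) ^ (-α - 1) := by
      rw [intervalIntegral.integral_eq_sub_of_hasDerivAt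
        (fun t ht => hasDerivAt_one_add_rpow α t (le_trans (le_min le_rfl hx) ht.1))
        (((continuousOn_one_add_rpow (-α-1) le_rfl hx).const_smul (-α)).intervalIntegrable)]
      simp
    have hsum : ∑ j ∈ Finset.range (0 + 1),
        (-1) ^ j * poch α j / (Nat.factorial j : ℝ) * x ^ j = 1 := by
      simp [poch_zero]
    rw [hsum, key]
    refine le_trans (intervalIntegral.abs_integral_le_integral_abs hx) ?_
    have hmono : (∫ s in (0:ℝ)..x, |(-α * (1 + s) ^ (-α - 1))|) ≤ ∫ _ in (0:ℝ)..x, α := by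
      apply intervalIntegral.integral_mono_on hx
      · exact (((continuousOn_one_add_rpow (-α-1) le_rfl hx).const_smul
          (-α)).abs).intervalIntegrable
      · exact intervalIntegrable_const
      · intro s hs
        have h1 : (0:ℝ) ≤ 1 + s := by have := hs.1; linarith
        rw [abs_mul, abs_neg, abs_of_pos hα, abs_of_nonneg (Real.rpow_nonneg h1 _)]
        have : (1 + s) ^ (-α - 1) ≤ 1 :=
          Real.rpow_le_one_of_one_le_of_nonpos (by have := hs.1; linarith) (by linarith)
        nlinarith
    refine le_trans hmono ?_
    rw [intervalIntegral.integral_const, smul_eq_mul, poch_succ, poch_zero]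
    simp
    ring_nf
    exact le_rfl
  | succ n ih =>
    intro α hα x hx
    have hderiv : ∀ t ∈ Set.uIcc (0:ℝ) x, HasDerivAt
        (fun t : ℝ => (1 + t) ^ (-α) - ∑ j ∈ Finset.range (n + 2),
          (-1) ^ j * poch α j / (Nat.factorial j : ℝ) * t ^ j)
        (-α * ((1 + t) ^ (-(α+1)) - ∑ j ∈ Finset.range (n + 1),
          (-1) ^ j * poch (α+1) j / (Nat.factorial j : ℝ) * t ^ j)) t := by
      intro t ht
      have ht0 : 0 ≤ t := le_trans (le_min le_rfl hx) ht.1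
      have h1 := hasDerivAt_one_add_rpow α t ht0
      have h2 : HasDerivAt (fun s : ℝ => ∑ j ∈ Finset.range (n + 2),
          (-1) ^ j * poch α j / (Nat.factorial j : ℝ) * s ^ j)
          (∑ j ∈ Finset.range (n + 2),
            (-1) ^ j * poch α j / (Nat.factorial j : ℝ) * ((j:ℝ) * t ^ (j - 1))) t := by
        apply HasDerivAt.fun_sum
        intro j _
        exact (hasDerivAt_pow j t).const_mul _
      have hre : (∑ j ∈ Finset.range (n + 2),
            (-1) ^ j * poch α j / (Nat.factorial j : ℝ) * ((j:ℝ) * t ^ (j - 1)))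
          = -α * ∑ j ∈ Finset.range (n + 1),
              (-1) ^ j * poch (α+1) j / (Nat.factorial j : ℝ) * t ^ j := by
        rw [Finset.sum_range_succ' _ (n+1), Finset.mul_sum]
        have hpt : ∀ j ∈ Finset.range (n+1),
            (-1 : ℝ) ^ (j+1) * poch α (j+1) / (Nat.factorial (j+1) : ℝ) * (((j+1 : ℕ):ℝ) * t ^ (j+1-1))
            = -α * ((-1) ^ j * poch (α+1) j / (Nat.factorial j : ℝ) * t ^ j) := by
          intro j _
          rw [poch_succ' α j, pow_succ, Nat.factorial_succ]
          have hf : (Nat.factorial j : ℝ) ≠ 0 := Nat.cast_ne_zero.2 (Nat.factorial_ne_zero j)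
          push_cast
          field_simp
        rw [Finset.sum_congr rfl hpt]
        simp
      have := h1.sub h2
      rw [hre] at this
      rw [show (-(α+1) : ℝ) = -α - 1 by ring]
      exact this.congr_deriv (by ring)
    have hcontG : ContinuousOn (fun s : ℝ => -α * ((1 + s) ^ (-(α+1)) - ∑ j ∈ Finset.range (n + 1),
          (-1) ^ j * poch (α+1) j / (Nat.factorial j : ℝ) * s ^ j)) (Set.uIcc 0 x) := by
      exact continuousOn_const.mul ((continuousOn_one_add_rpow (-(α+1)) le_rfl hx).sub
        (Continuous.continuousOn (by continuity)))
    have key : (1 + x) ^ (-α) - ∑ j ∈ Finset.range (n + 2),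
          (-1) ^ j * poch α j / (Nat.factorial j : ℝ) * x ^ j
        = ∫ s in (0:ℝ)..x, -α * ((1 + s) ^ (-(α+1)) - ∑ j ∈ Finset.range (n + 1),
            (-1) ^ j * poch (α+1) j / (Nat.factorial j : ℝ) * s ^ j) := by
      rw [intervalIntegral.integral_eq_sub_of_hasDerivAt hderiv hcontG.intervalIntegrable]
      have h0 : ∑ j ∈ Finset.range (n + 2),
          (-1 : ℝ) ^ j * poch α j / (Nat.factorial j : ℝ) * (0:ℝ) ^ j = 1 := by
        rw [Finset.sum_eq_single 0]
        · simp [poch_zero]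
        · intro j _ hj
          simp [zero_pow hj]
        · simp
      rw [h0]
      norm_num
    rw [key]
    refine le_trans (intervalIntegral.abs_integral_le_integral_abs hx) ?_
    have hbound : ∀ s ∈ Set.Icc (0:ℝ) x,
        |(-α * ((1 + s) ^ (-(α+1)) - ∑ j ∈ Finset.range (n + 1),
          (-1) ^ j * poch (α+1) j / (Nat.factorial j : ℝ) * s ^ j))|
        ≤ α * (poch (α+1) (n + 1) / (Nat.factorial (n + 1) : ℝ) * s ^ (n + 1)) := by
      intro s hs
      rw [abs_mul, abs_neg, abs_of_pos hα]
      exact mul_le_mul_of_nonneg_left (ih (α+1) (by linarith) s hs.1) (le_of_lt hα)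
    have hmono : (∫ s in (0:ℝ)..x, |(-α * ((1 + s) ^ (-(α+1)) - ∑ j ∈ Finset.range (n + 1),
          (-1) ^ j * poch (α+1) j / (Nat.factorial j : ℝ) * s ^ j))|)
        ≤ ∫ s in (0:ℝ)..x, α * (poch (α+1) (n + 1) / (Nat.factorial (n + 1) : ℝ) * s ^ (n + 1)) := by
      apply intervalIntegral.integral_mono_on hx
      · exact hcontG.abs.intervalIntegrable
      · exact (Continuous.intervalIntegrable (continuous_const.mul (continuous_const.mul (continuous_pow _))) _ _)
      · exact hbound
    refine le_trans hmono ?_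
    have : (∫ s in (0:ℝ)..x, α * (poch (α+1) (n + 1) / (Nat.factorial (n + 1) : ℝ) * s ^ (n + 1)))
        = α * (poch (α+1) (n + 1) / (Nat.factorial (n + 1) : ℝ)) * (x ^ (n + 2) / (n + 2)) := by
      rw [intervalIntegral.integral_const_mul]
      rw [intervalIntegral.integral_const_mul, integral_pow]
      push_cast
      ring
    rw [this, poch_succ' α (n+1), Nat.factorial_succ (n+1)]
    apply le_of_eq
    have h1 : ((n:ℝ) + 2) ≠ 0 := by positivity
    have h2 : (Nat.factorial (n+1) : ℝ) ≠ 0 := Nat.cast_ne_zero.2 (Nat.factorial_ne_zero _)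
    push_cast
    field_simp
    ring_nf

lemma hasDerivAt_log_ratio {t : ℝ} (h1 : -1 < t) (h2 : t < 1) :
    HasDerivAt (fun s : ℝ => (1/2) * (Real.log (1 + s) - Real.log (1 - s)))
      (1 / (1 - t ^ 2)) t := by
  have ha : (1:ℝ) + t ≠ 0 := by linarith
  have hb : (1:ℝ) - t ≠ 0 := by linarith
  have d1 : HasDerivAt (fun s : ℝ => Real.log (1 + s)) (1 / (1 + t)) t := by
    have := (Real.hasDerivAt_log ha).comp t ((hasDerivAt_id t).const_add 1)
    simpa [one_div, Function.comp_def] using this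
  have d2 : HasDerivAt (fun s : ℝ => Real.log (1 - s)) (-(1 / (1 - t))) t := by
    have hinner : HasDerivAt (fun s : ℝ => 1 - s) (-1) t := by
      simpa using (hasDerivAt_id t).const_sub 1
    have := (Real.hasDerivAt_log hb).comp t hinner
    simpa [one_div, Function.comp_def] using this
  have := (d1.sub d2).const_mul (1/2 : ℝ)
  refine this.congr_deriv ?_
  have hc : (1:ℝ) - t ^ 2 ≠ 0 := by nlinarith
  field_simp
  ring

lemma integral_base {l : ℝ} (hl0 : 0 < l) (hl1 : l < 1) :
    ∫ t in (0:ℝ)..l, 1 / (1 - t ^ 2)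
      = (1/2) * Real.log ((1 + l) / (1 - l)) := by
  have hderiv : ∀ t ∈ Set.uIcc (0:ℝ) l, HasDerivAt
      (fun s : ℝ => (1/2) * (Real.log (1 + s) - Real.log (1 - s))) (1 / (1 - t ^ 2)) t := by
    intro t ht
    rw [Set.uIcc_of_le (le_of_lt hl0)] at ht
    exact hasDerivAt_log_ratio (by linarith [ht.1]) (by linarith [ht.2])
  have hcont : ContinuousOn (fun t : ℝ => 1 / (1 - t ^ 2)) (Set.uIcc 0 l) := by
    apply ContinuousOn.div continuousOn_const
    · exact (continuous_const.sub (continuous_pow 2)).continuousOn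
    · intro t ht
      rw [Set.uIcc_of_le (le_of_lt hl0)] at ht
      have := ht.1; have := ht.2
      nlinarith
  rw [intervalIntegral.integral_eq_sub_of_hasDerivAt hderiv hcont.intervalIntegrable]
  rw [Real.log_div (by linarith) (by linarith)]
  norm_num

lemma hasDerivAt_e {j : ℕ} {t : ℝ} (ht : 1 - t ^ 2 ≠ 0) :
    HasDerivAt (fun s : ℝ => s ^ (2*j+1) / (1 - s ^ 2) ^ (j+1))
      (((2*(j:ℝ)+1) * t ^ (2*j) + t ^ (2*j+2)) / (1 - t ^ 2) ^ (j+2)) t := by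
  have hnum : HasDerivAt (fun s : ℝ => s ^ (2*j+1))
      ((2*(j:ℝ)+1) * t ^ (2*j)) t := by
    have h := hasDerivAt_pow (2*j+1) t
    norm_num at h
    convert h using 1
  have hinner : HasDerivAt (fun s : ℝ => 1 - s ^ 2) (-(2*t)) t := by
    simpa using (hasDerivAt_pow 2 t).const_sub 1
  have hden : HasDerivAt (fun s : ℝ => (1 - s ^ 2) ^ (j+1))
      (((j:ℝ)+1) * (1 - t ^ 2) ^ j * (-(2*t))) t := by
    have := (hasDerivAt_pow (j+1) (1 - t ^ 2)).comp t hinner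
    refine this.congr_deriv ?_
    push_cast
    ring
  have hdenne : ((1 : ℝ) - t ^ 2) ^ (j+1) ≠ 0 := pow_ne_zero _ ht
  have := hnum.div hden hdenne
  refine this.congr_deriv ?_
  field_simp
  ring

lemma one_sub_sq_pos {l t : ℝ} (hl1 : l < 1) (ht : t ∈ Set.Icc 0 l) : 0 < 1 - t ^ 2 := by
  have h1 := ht.1; have h2 := ht.2
  nlinarith

lemma contOn_f {l : ℝ} (hl0 : 0 < l) (hl1 : l < 1) (p q : ℕ) :
    ContinuousOn (fun t : ℝ => t ^ p / (1 - t ^ 2) ^ q) (Set.uIcc 0 l) := by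
  rw [Set.uIcc_of_le (le_of_lt hl0)]
  apply ContinuousOn.div
  · exact (continuous_pow p).continuousOn
  · exact ((continuous_const.sub (continuous_pow 2)).pow q).continuousOn
  · intro t ht
    exact pow_ne_zero _ (ne_of_gt (one_sub_sq_pos hl1 ht))

lemma integral_closed_form {l : ℝ} (hl0 : 0 < l) (hl1 : l < 1) (j : ℕ) :
    ∫ t in (0:ℝ)..l, t ^ (2*j) / (1 - t ^ 2) ^ (j+1)
      = (-1)^j * poch (1/2) j / (Nat.factorial j : ℝ) * ((1/2) * Real.log ((1+l)/(1-l)))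
        + (1/(2*l)) * ∑ n ∈ Finset.range j,
            (-1)^n * poch (1/2 - (j:ℝ)) n / ((j:ℝ) * poch (1 - (j:ℝ)) n)
              * (l^2/(1-l^2)) ^ (j - n) := by
  have hl2 : (0:ℝ) < 1 - l ^ 2 := by nlinarith
  induction j with
  | zero =>
    simp only [Nat.mul_zero, pow_zero, zero_add, pow_one, Finset.range_zero,
      Finset.sum_empty, mul_zero, add_zero, poch_zero, Nat.factorial_zero]
    rw [integral_base hl0 hl1]
    norm_num
  | succ j ih =>
    have hpt : Set.EqOn (fun t : ℝ => t ^ (2*(j+1)) / (1 - t ^ 2) ^ ((j+1)+1))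
        (fun t : ℝ => (1/(2*(j:ℝ)+2)) * (((2*(j:ℝ)+1) * t ^ (2*j) + t ^ (2*j+2)) / (1 - t ^ 2) ^ (j+2))
          - ((2*(j:ℝ)+1)/(2*(j:ℝ)+2)) * (t ^ (2*j) / (1 - t ^ 2) ^ (j+1)))
        (Set.uIcc 0 l) := by
      intro t ht
      rw [Set.uIcc_of_le (le_of_lt hl0)] at ht
      have h1 : (1:ℝ) - t ^ 2 ≠ 0 := ne_of_gt (one_sub_sq_pos hl1 ht)
      have h2 : (2*(j:ℝ)+2) ≠ 0 := by positivity
      simp only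
      rw [show 2*(j+1) = 2*j+2 by ring, show (j+1)+1 = j+2 by ring]
      field_simp
      ring
    rw [intervalIntegral.integral_congr hpt]
    have hint1 : IntervalIntegrable (fun t : ℝ =>
        (1/(2*(j:ℝ)+2)) * (((2*(j:ℝ)+1) * t ^ (2*j) + t ^ (2*j+2)) / (1 - t ^ 2) ^ (j+2)))
        MeasureTheory.volume 0 l := by
      apply ContinuousOn.intervalIntegrable
      apply ContinuousOn.mul continuousOn_const
      apply ContinuousOn.div
      · exact ((continuous_const.mul (continuous_pow (2*j))).add (continuous_pow (2*j+2))).continuousOn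
      · exact ((continuous_const.sub (continuous_pow 2)).pow (j+2)).continuousOn
      · intro t ht
        rw [Set.uIcc_of_le (le_of_lt hl0)] at ht
        exact pow_ne_zero _ (ne_of_gt (one_sub_sq_pos hl1 ht))
    have hint2 : IntervalIntegrable (fun t : ℝ =>
        ((2*(j:ℝ)+1)/(2*(j:ℝ)+2)) * (t ^ (2*j) / (1 - t ^ 2) ^ (j+1)))
        MeasureTheory.volume 0 l :=
      (continuousOn_const.mul (contOn_f hl0 hl1 _ _)).intervalIntegrable
    rw [intervalIntegral.integral_sub hint1 hint2,
      intervalIntegral.integral_const_mul, intervalIntegral.integral_const_mul]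
    have hkey : (∫ t in (0:ℝ)..l, ((2*(j:ℝ)+1) * t ^ (2*j) + t ^ (2*j+2)) / (1 - t ^ 2) ^ (j+2))
        = l ^ (2*j+1) / (1 - l ^ 2) ^ (j+1) := by
      have hd : ∀ t ∈ Set.uIcc (0:ℝ) l, HasDerivAt (fun s : ℝ => s ^ (2*j+1) / (1 - s ^ 2) ^ (j+1))
          (((2*(j:ℝ)+1) * t ^ (2*j) + t ^ (2*j+2)) / (1 - t ^ 2) ^ (j+2)) t := by
        intro t ht
        rw [Set.uIcc_of_le (le_of_lt hl0)] at ht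
        exact hasDerivAt_e (ne_of_gt (one_sub_sq_pos hl1 ht))
      have hc : ContinuousOn (fun t : ℝ => ((2*(j:ℝ)+1) * t ^ (2*j) + t ^ (2*j+2)) / (1 - t ^ 2) ^ (j+2))
          (Set.uIcc 0 l) := by
        apply ContinuousOn.div
        · exact ((continuous_const.mul (continuous_pow (2*j))).add (continuous_pow (2*j+2))).continuousOn
        · exact ((continuous_const.sub (continuous_pow 2)).pow (j+2)).continuousOn
        · intro t ht
          rw [Set.uIcc_of_le (le_of_lt hl0)] at ht
          exact pow_ne_zero _ (ne_of_gt (one_sub_sq_pos hl1 ht))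
      rw [intervalIntegral.integral_eq_sub_of_hasDerivAt hd hc.intervalIntegrable]
      norm_num
    rw [hkey, ih]
    -- now pure algebra
    set L := (1/2) * Real.log ((1+l)/(1-l)) with hL
    set r := l^2/(1-l^2) with hr
    have hLcoef : (-1:ℝ)^(j+1) * poch (1/2) (j+1) / (Nat.factorial (j+1) : ℝ)
        = -((2*(j:ℝ)+1)/(2*(j:ℝ)+2)) * ((-1)^j * poch (1/2) j / (Nat.factorial j : ℝ)) := by
      rw [poch_succ, pow_succ, Nat.factorial_succ]
      have h2 : (2*(j:ℝ)+2) ≠ 0 := by positivity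
      have hf : (Nat.factorial j : ℝ) ≠ 0 := Nat.cast_ne_zero.2 (Nat.factorial_ne_zero _)
      push_cast
      field_simp
      ring
    have hsum : ∑ n ∈ Finset.range (j+1),
          (-1:ℝ)^n * poch (1/2 - ((j:ℝ)+1)) n / (((j:ℝ)+1) * poch (1 - ((j:ℝ)+1)) n) * r ^ (j+1-n)
        = (1/((j:ℝ)+1)) * r ^ (j+1)
          - ((2*(j:ℝ)+1)/(2*(j:ℝ)+2)) * ∑ n ∈ Finset.range j,
              (-1:ℝ)^n * poch (1/2 - (j:ℝ)) n / ((j:ℝ) * poch (1 - (j:ℝ)) n) * r ^ (j-n) := by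
      rw [Finset.sum_range_succ' _ j]
      have hterm : ∀ n ∈ Finset.range j,
          (-1:ℝ)^(n+1) * poch (1/2 - ((j:ℝ)+1)) (n+1) / (((j:ℝ)+1) * poch (1 - ((j:ℝ)+1)) (n+1)) * r ^ (j+1-(n+1))
          = -((2*(j:ℝ)+1)/(2*(j:ℝ)+2)) * ((-1)^n * poch (1/2 - (j:ℝ)) n / ((j:ℝ) * poch (1 - (j:ℝ)) n) * r ^ (j-n)) := by
        intro n hn
        have hnj : n < j := Finset.mem_range.1 hn
        have hj0 : (j:ℝ) ≠ 0 := by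
          have : 0 < j := lt_of_le_of_lt (Nat.zero_le n) hnj
          exact_mod_cast Nat.pos_iff_ne_zero.1 this
        have hj1 : ((j:ℝ)+1) ≠ 0 := by positivity
        have h2 : (2*(j:ℝ)+2) ≠ 0 := by positivity
        have hpne : poch (1 - (j:ℝ)) n ≠ 0 := poch_ne_zero_of_neg_int hnj
        have e1 : poch (1/2 - ((j:ℝ)+1)) (n+1) = (1/2 - ((j:ℝ)+1)) * poch (1/2 - (j:ℝ)) n := by
          rw [poch_succ']
          ring_nf
        have e2 : poch (1 - ((j:ℝ)+1)) (n+1) = (-(j:ℝ)) * poch (1 - (j:ℝ)) n := by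
          rw [poch_succ']
          ring_nf
        rw [e1, e2, Nat.succ_sub_succ j n, pow_succ]
        field_simp
        ring
      rw [Finset.sum_congr rfl hterm]
      simp only [poch_zero, pow_zero, mul_one, one_mul, Nat.sub_zero]
      rw [← Finset.mul_sum]
      ring
    push_cast
    rw [hLcoef, hsum]
    have hrpow : r ^ (j+1) = l ^ (2*(j+1)) / (1-l^2) ^ (j+1) := by
      rw [hr, div_pow, pow_mul]
    have hl2' : ((1:ℝ)-l^2) ^ (j+1) ≠ 0 := pow_ne_zero _ (ne_of_gt hl2)
    have hlne : l ≠ 0 := ne_of_gt hl0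
    have h2 : (2*(j:ℝ)+2) ≠ 0 := by positivity
    have hj1 : ((j:ℝ)+1) ≠ 0 := by positivity
    rw [hrpow, show 2*(j+1) = 2*j+2 by ring]
    field_simp
    ring

lemma hasDerivAt_b {m : ℕ} {t : ℝ} (ht : 1 - t ^ 2 ≠ 0) :
    HasDerivAt (fun s : ℝ => s ^ (2*m+2) / (1 - s ^ 2) ^ (m+1))
      ((2*(m:ℝ)+2) * t ^ (2*m+1) / (1 - t ^ 2) ^ (m+2)) t := by
  have hnum : HasDerivAt (fun s : ℝ => s ^ (2*m+2)) ((2*(m:ℝ)+2) * t ^ (2*m+1)) t := by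
    have h := hasDerivAt_pow (2*m+2) t
    norm_num at h
    convert h using 1
  have hinner : HasDerivAt (fun s : ℝ => 1 - s ^ 2) (-(2*t)) t := by
    simpa using (hasDerivAt_pow 2 t).const_sub 1
  have hden : HasDerivAt (fun s : ℝ => (1 - s ^ 2) ^ (m+1))
      (((m:ℝ)+1) * (1 - t ^ 2) ^ m * (-(2*t))) t := by
    have := (hasDerivAt_pow (m+1) (1 - t ^ 2)).comp t hinner
    refine this.congr_deriv ?_
    push_cast
    ring
  have hdenne : ((1 : ℝ) - t ^ 2) ^ (m+1) ≠ 0 := pow_ne_zero _ ht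
  have := hnum.div hden hdenne
  refine this.congr_deriv ?_
  field_simp
  ring

lemma integral_bound_aux {l : ℝ} (hl0 : 0 < l) (hl1 : l < 1) (m : ℕ) :
    ∫ t in (0:ℝ)..l, (2*(m:ℝ)+2) * t ^ (2*m+1) / (1 - t ^ 2) ^ (m+2)
      = l ^ (2*m+2) / (1 - l ^ 2) ^ (m+1) := by
  have hd : ∀ t ∈ Set.uIcc (0:ℝ) l, HasDerivAt (fun s : ℝ => s ^ (2*m+2) / (1 - s ^ 2) ^ (m+1))
      ((2*(m:ℝ)+2) * t ^ (2*m+1) / (1 - t ^ 2) ^ (m+2)) t := by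
    intro t ht
    rw [Set.uIcc_of_le (le_of_lt hl0)] at ht
    exact hasDerivAt_b (ne_of_gt (one_sub_sq_pos hl1 ht))
  have hcont : ContinuousOn (fun t : ℝ => (2*(m:ℝ)+2) * t ^ (2*m+1) / (1 - t ^ 2) ^ (m+2))
      (Set.uIcc 0 l) := by
    apply ContinuousOn.div
    · exact (continuous_const.mul (continuous_pow (2*m+1))).continuousOn
    · exact ((continuous_const.sub (continuous_pow 2)).pow (m+2)).continuousOn
    · intro t ht
      rw [Set.uIcc_of_le (le_of_lt hl0)] at ht
      exact pow_ne_zero _ (ne_of_gt (one_sub_sq_pos hl1 ht))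
  rw [intervalIntegral.integral_eq_sub_of_hasDerivAt hd hcont.intervalIntegrable]
  norm_num

theorem stmt2 (l k : ℝ) (hl0 : 0 < l) (hl1 : l < 1) (hk0 : 0 < k) (hk1 : k < 1)
    (hcond : 1 - k ^ 2 < (1 - l ^ 2) / l ^ 2) (N : ℕ) :
    |(∫ t in (0:ℝ)..l, 1 / Real.sqrt ((1 - t ^ 2) * (1 - k ^ 2 * t ^ 2)))
      - (1/2) * Real.log ((1 + l) / (1 - l)) *
          ∑ j ∈ Finset.range (N + 1),
            (poch (1/2) j) ^ 2 / ((Nat.factorial j : ℝ)) ^ 2 * (1 - k ^ 2) ^ j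
      - (1 / (2 * l)) *
          ∑ j ∈ Finset.Icc 1 N, ∑ n ∈ Finset.range j,
            (-1 : ℝ) ^ (j + n) *
              (poch (1/2) j * poch (1/2 - (j : ℝ)) n) /
                ((j : ℝ) * (Nat.factorial j : ℝ) * poch (1 - (j : ℝ)) n) *
              (1 - k ^ 2) ^ j * (l ^ 2 / (1 - l ^ 2)) ^ (j - n)|
    ≤ l * poch (1/2) (N + 1) / (2 * ((N : ℝ) + 1) * (Nat.factorial (N + 1) : ℝ)) *
        (l ^ 2 * (1 - k ^ 2) / (1 - l ^ 2)) ^ (N + 1) := by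
  have hl2 : (0:ℝ) < 1 - l ^ 2 := by nlinarith
  have hc0 : (0:ℝ) < 1 - k ^ 2 := by nlinarith
  set c : ℝ := 1 - k ^ 2 with hc
  set L : ℝ := (1/2) * Real.log ((1 + l) / (1 - l)) with hL
  set r : ℝ := l ^ 2 / (1 - l ^ 2) with hr
  set f : ℝ → ℝ := fun t => 1 / Real.sqrt ((1 - t ^ 2) * (1 - k ^ 2 * t ^ 2)) with hf
  set g : ℕ → ℝ → ℝ := fun j t => (-1)^j * poch (1/2) j / (Nat.factorial j : ℝ) * c ^ j *
      (t ^ (2*j) / (1 - t ^ 2) ^ (j+1)) with hg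
  have hpos : ∀ t ∈ Set.Icc (0:ℝ) l, 0 < 1 - t ^ 2 := fun t ht => one_sub_sq_pos hl1 ht
  have hpos2 : ∀ t ∈ Set.Icc (0:ℝ) l, 0 < 1 - k ^ 2 * t ^ 2 := by
    intro t ht
    have h1 := ht.1; have h2 := ht.2
    nlinarith
  -- rewrite f
  have hfx : ∀ t ∈ Set.Icc (0:ℝ) l,
      f t = (1 / (1 - t ^ 2)) * (1 + c * t ^ 2 / (1 - t ^ 2)) ^ (-(1/2) : ℝ) := by
    intro t ht
    have hu : 0 < 1 - t ^ 2 := hpos t ht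
    have hx0 : 0 ≤ c * t ^ 2 / (1 - t ^ 2) := by positivity
    have h1x : (0:ℝ) < 1 + c * t ^ 2 / (1 - t ^ 2) := by linarith
    have hprod : (1 - t ^ 2) * (1 - k ^ 2 * t ^ 2)
        = (1 - t ^ 2) ^ 2 * (1 + c * t ^ 2 / (1 - t ^ 2)) := by
      field_simp
      ring
    rw [hf]
    simp only
    rw [hprod, Real.sqrt_mul (sq_nonneg _), Real.sqrt_sq hu.le,
      Real.rpow_neg h1x.le, Real.sqrt_eq_rpow]
    rw [one_div, mul_inv, ← one_div]
  -- continuity of f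
  have hfcont : ContinuousOn f (Set.uIcc 0 l) := by
    rw [Set.uIcc_of_le hl0.le]
    apply ContinuousOn.div continuousOn_const
    · exact (Real.continuous_sqrt.comp ((continuous_const.sub (continuous_pow 2)).mul
        (continuous_const.sub (continuous_const.mul (continuous_pow 2))))).continuousOn
    · intro t ht
      have := hpos t ht; have := hpos2 t ht
      positivity
  have hgcont : ∀ j, ContinuousOn (g j) (Set.uIcc 0 l) := by
    intro j
    exact continuousOn_const.mul (contOn_f hl0 hl1 _ _)
  -- split the integral
  have hsplit : (∫ t in (0:ℝ)..l, f t)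
      = (∑ j ∈ Finset.range (N+1), ∫ t in (0:ℝ)..l, g j t)
        + ∫ t in (0:ℝ)..l, (f t - ∑ j ∈ Finset.range (N+1), g j t) := by
    rw [intervalIntegral.integral_sub hfcont.intervalIntegrable
      ((continuousOn_finset_sum _ (fun j _ => hgcont j)).intervalIntegrable),
      intervalIntegral.integral_finset_sum
        (fun j _ => (hgcont j).intervalIntegrable)]
    ring
  -- closed form for each g-integral
  have hIg : ∀ j, (∫ t in (0:ℝ)..l, g j t)
      = (-1)^j * poch (1/2) j / (Nat.factorial j : ℝ) * c ^ j *
        ((-1)^j * poch (1/2) j / (Nat.factorial j : ℝ) * L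
          + (1/(2*l)) * ∑ n ∈ Finset.range j,
              (-1)^n * poch (1/2 - (j:ℝ)) n / ((j:ℝ) * poch (1 - (j:ℝ)) n) * r ^ (j - n)) := by
    intro j
    rw [hg]
    simp only
    rw [intervalIntegral.integral_const_mul, integral_closed_form hl0 hl1 j]
  -- the combinatorial identity
  have hcomb : (∑ j ∈ Finset.range (N+1), ∫ t in (0:ℝ)..l, g j t)
      = L * (∑ j ∈ Finset.range (N + 1),
            (poch (1/2) j) ^ 2 / ((Nat.factorial j : ℝ)) ^ 2 * c ^ j)
        + (1 / (2 * l)) * ∑ j ∈ Finset.Icc 1 N, ∑ n ∈ Finset.range j,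
            (-1 : ℝ) ^ (j + n) * (poch (1/2) j * poch (1/2 - (j : ℝ)) n) /
                ((j : ℝ) * (Nat.factorial j : ℝ) * poch (1 - (j : ℝ)) n) *
              c ^ j * r ^ (j - n) := by
    have hterm : ∀ j, (∫ t in (0:ℝ)..l, g j t)
        = (poch (1/2) j) ^ 2 / ((Nat.factorial j : ℝ)) ^ 2 * c ^ j * L
          + (1/(2*l)) * ∑ n ∈ Finset.range j,
              (-1 : ℝ) ^ (j + n) * (poch (1/2) j * poch (1/2 - (j : ℝ)) n) /
                ((j : ℝ) * (Nat.factorial j : ℝ) * poch (1 - (j : ℝ)) n) *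
              c ^ j * r ^ (j - n) := by
      intro j
      rw [hIg j]
      have h1 : ((-1:ℝ)^j) * ((-1:ℝ)^j) = 1 := by
        rw [← mul_pow]
        norm_num
      rw [mul_add]
      congr 1
      · have he : (-1:ℝ)^j * poch (1/2) j / (Nat.factorial j : ℝ) * c ^ j *
            ((-1)^j * poch (1/2) j / (Nat.factorial j : ℝ) * L)
            = (((-1:ℝ)^j) * ((-1:ℝ)^j)) * ((poch (1/2) j)^2 / ((Nat.factorial j : ℝ))^2 * c ^ j * L) := by
          ring
        rw [he, h1, one_mul]
      · rw [mul_left_comm]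
        congr 1
        rw [Finset.mul_sum]
        apply Finset.sum_congr rfl
        intro n _
        rw [pow_add]
        ring
    rw [Finset.sum_congr rfl (fun j _ => hterm j), Finset.sum_add_distrib, ← Finset.mul_sum,
      ← Finset.sum_mul]
    congr 1
    · rw [Finset.mul_sum, Finset.sum_mul]
      apply Finset.sum_congr rfl
      intro j _
      ring
    · congr 1
      refine (Finset.sum_subset ?_ ?_).symm
      · intro j hj
        simp only [Finset.mem_Icc] at hj
        exact Finset.mem_range.2 (Nat.lt_succ_of_le hj.2)
      · intro j hj hnj
        simp only [Finset.mem_range] at hj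
        simp only [Finset.mem_Icc] at hnj
        have : j = 0 := by omega
        subst this
        simp
  -- now the remainder
  have hmain : (∫ t in (0:ℝ)..l, f t)
        - L * (∑ j ∈ Finset.range (N + 1),
            (poch (1/2) j) ^ 2 / ((Nat.factorial j : ℝ)) ^ 2 * c ^ j)
        - (1 / (2 * l)) * ∑ j ∈ Finset.Icc 1 N, ∑ n ∈ Finset.range j,
            (-1 : ℝ) ^ (j + n) * (poch (1/2) j * poch (1/2 - (j : ℝ)) n) /
                ((j : ℝ) * (Nat.factorial j : ℝ) * poch (1 - (j : ℝ)) n) *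
              c ^ j * r ^ (j - n)
      = ∫ t in (0:ℝ)..l, (f t - ∑ j ∈ Finset.range (N+1), g j t) := by
    rw [hsplit, hcomb]
    ring
  rw [hmain]
  -- bound the remainder integral
  have hptbound : ∀ t ∈ Set.Icc (0:ℝ) l,
      |f t - ∑ j ∈ Finset.range (N+1), g j t|
      ≤ poch (1/2) (N+1) / (Nat.factorial (N+1) : ℝ) * c ^ (N+1) * l *
          (t ^ (2*N+1) / (1 - t ^ 2) ^ (N+2)) := by
    intro t ht
    have hu : 0 < 1 - t ^ 2 := hpos t ht
    set x : ℝ := c * t ^ 2 / (1 - t ^ 2) with hxdef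
    have hx0 : 0 ≤ x := by positivity
    have hgx : ∀ j, g j t = (1/(1 - t ^ 2)) * ((-1)^j * poch (1/2) j / (Nat.factorial j : ℝ) * x ^ j) := by
      intro j
      rw [hg]
      simp only
      rw [hxdef, div_pow, mul_pow, pow_succ]
      rw [show (t ^ 2) ^ j = t ^ (2*j) by rw [← pow_mul, mul_comm]]
      field_simp
    rw [hfx t ht, Finset.sum_congr rfl (fun j _ => hgx j), ← Finset.mul_sum, ← mul_sub,
      abs_mul]
    have h1 : |1/(1 - t ^ 2)| = 1/(1 - t ^ 2) := abs_of_pos (by positivity)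
    rw [h1]
    have hb := binom_rem N (1/2) (by norm_num) x hx0
    have hbb : |(1 + x) ^ (-(1/2) : ℝ) - ∑ j ∈ Finset.range (N + 1),
        (-1) ^ j * poch (1/2) j / (Nat.factorial j : ℝ) * x ^ j|
        ≤ poch (1/2) (N + 1) / (Nat.factorial (N + 1) : ℝ) * x ^ (N + 1) := hb
    have h2 : (1:ℝ)/(1 - t ^ 2) * |(1 + x) ^ (-(1/2) : ℝ) - ∑ j ∈ Finset.range (N + 1),
        (-1) ^ j * poch (1/2) j / (Nat.factorial j : ℝ) * x ^ j|
        ≤ (1/(1 - t ^ 2)) * (poch (1/2) (N + 1) / (Nat.factorial (N + 1) : ℝ) * x ^ (N + 1)) :=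
      mul_le_mul_of_nonneg_left hbb (by positivity)
    refine le_trans h2 ?_
    -- now  (1/(1-t²)) * C x^{N+1} ≤ C c^{N+1} l t^{2N+1}/(1-t²)^{N+2}
    have hxpow : x ^ (N+1) = c ^ (N+1) * t ^ (2*(N+1)) / (1 - t ^ 2) ^ (N+1) := by
      rw [hxdef, div_pow, mul_pow, ← pow_mul, mul_comm 2 (N+1)]
    rw [hxpow]
    have hC : 0 ≤ poch (1/2) (N+1) / (Nat.factorial (N+1) : ℝ) := by
      have := poch_pos (by norm_num : (0:ℝ) < 1/2) (N+1)
      positivity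
    have htle : t ^ (2*(N+1)) ≤ l * t ^ (2*N+1) := by
      have h2N : t ^ (2*(N+1)) = t * t ^ (2*N+1) := by
        rw [← pow_succ']
        congr 1
      rw [h2N]
      exact mul_le_mul_of_nonneg_right ht.2 (pow_nonneg ht.1 _)
    have hfinal : (1:ℝ)/(1 - t ^ 2) * (c ^ (N+1) * t ^ (2*(N+1)) / (1 - t ^ 2) ^ (N+1))
        ≤ c ^ (N+1) * l * (t ^ (2*N+1) / (1 - t ^ 2) ^ (N+2)) := by
      have hpow : (1 - t ^ 2) ^ (N+2) = (1 - t ^ 2) * (1 - t ^ 2) ^ (N+1) := pow_succ' _ _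
      have e1 : (1:ℝ)/(1 - t ^ 2) * (c ^ (N+1) * t ^ (2*(N+1)) / (1 - t ^ 2) ^ (N+1))
          = c ^ (N+1) * t ^ (2*(N+1)) / (1 - t ^ 2) ^ (N+2) := by
        rw [hpow]
        field_simp
      rw [e1, div_le_iff₀ (by positivity)]
      calc c ^ (N+1) * t ^ (2*(N+1)) ≤ c ^ (N+1) * (l * t ^ (2*N+1)) :=
            mul_le_mul_of_nonneg_left htle (by positivity)
        _ = c ^ (N+1) * l * (t ^ (2*N+1) / (1 - t ^ 2) ^ (N+2)) * (1 - t ^ 2) ^ (N+2) := by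
            field_simp
    calc (1:ℝ)/(1 - t ^ 2) * (poch (1/2) (N + 1) / (Nat.factorial (N + 1) : ℝ) *
            (c ^ (N+1) * t ^ (2*(N+1)) / (1 - t ^ 2) ^ (N+1)))
        = poch (1/2) (N + 1) / (Nat.factorial (N + 1) : ℝ) *
            ((1:ℝ)/(1 - t ^ 2) * (c ^ (N+1) * t ^ (2*(N+1)) / (1 - t ^ 2) ^ (N+1))) := by ring
      _ ≤ poch (1/2) (N + 1) / (Nat.factorial (N + 1) : ℝ) *
            (c ^ (N+1) * l * (t ^ (2*N+1) / (1 - t ^ 2) ^ (N+2))) :=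
          mul_le_mul_of_nonneg_left hfinal hC
      _ = poch (1/2) (N+1) / (Nat.factorial (N+1) : ℝ) * c ^ (N+1) * l *
          (t ^ (2*N+1) / (1 - t ^ 2) ^ (N+2)) := by ring
  -- assemble the final bound
  set C : ℝ := poch (1/2) (N+1) / (Nat.factorial (N+1) : ℝ) * c ^ (N+1) * l with hC
  have hCpos : 0 < C := by
    have := poch_pos (by norm_num : (0:ℝ) < 1/2) (N+1)
    have hfp : (0:ℝ) < (Nat.factorial (N+1) : ℝ) := by positivity
    positivity
  have hρcont : ContinuousOn (fun t : ℝ => f t - ∑ j ∈ Finset.range (N+1), g j t)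
      (Set.uIcc 0 l) := hfcont.sub (continuousOn_finset_sum _ (fun j _ => hgcont j))
  have hhcont : ContinuousOn (fun t : ℝ => C * (t ^ (2*N+1) / (1 - t ^ 2) ^ (N+2)))
      (Set.uIcc 0 l) := continuousOn_const.mul (contOn_f hl0 hl1 _ _)
  have step1 := intervalIntegral.abs_integral_le_integral_abs
    (f := fun t => f t - ∑ j ∈ Finset.range (N+1), g j t) (a := 0) (b := l)
    (μ := MeasureTheory.volume) hl0.le
  have step2 : (∫ t in (0:ℝ)..l, |f t - ∑ j ∈ Finset.range (N+1), g j t|)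
      ≤ ∫ t in (0:ℝ)..l, C * (t ^ (2*N+1) / (1 - t ^ 2) ^ (N+2)) := by
    apply intervalIntegral.integral_mono_on hl0.le
    · exact hρcont.abs.intervalIntegrable
    · exact hhcont.intervalIntegrable
    · intro t ht
      have := hptbound t ht
      calc |f t - ∑ j ∈ Finset.range (N+1), g j t|
          ≤ poch (1/2) (N+1) / (Nat.factorial (N+1) : ℝ) * c ^ (N+1) * l *
              (t ^ (2*N+1) / (1 - t ^ 2) ^ (N+2)) := this
        _ = C * (t ^ (2*N+1) / (1 - t ^ 2) ^ (N+2)) := by rw [hC]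
  have haux : (∫ t in (0:ℝ)..l, t ^ (2*N+1) / (1 - t ^ 2) ^ (N+2))
      = l ^ (2*N+2) / ((2*(N:ℝ)+2) * (1 - l ^ 2) ^ (N+1)) := by
    have h0 := integral_bound_aux hl0 hl1 N
    have e : ∀ t : ℝ, (2*(N:ℝ)+2) * t ^ (2*N+1) / (1 - t ^ 2) ^ (N+2)
        = (2*(N:ℝ)+2) * (t ^ (2*N+1) / (1 - t ^ 2) ^ (N+2)) := fun t => mul_div_assoc _ _ _
    simp only [e] at h0
    rw [intervalIntegral.integral_const_mul] at h0
    have h2 : (2*(N:ℝ)+2) ≠ 0 := by positivity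
    have hlp : ((1:ℝ) - l ^ 2) ^ (N+1) ≠ 0 := pow_ne_zero _ (ne_of_gt hl2)
    rw [eq_div_iff (mul_ne_zero h2 hlp)]
    have h0' := congrArg (fun z : ℝ => z * ((1:ℝ) - l ^ 2) ^ (N+1)) h0
    rw [div_mul_cancel₀ _ hlp] at h0'
    linear_combination h0' 
  have step3 : (∫ t in (0:ℝ)..l, C * (t ^ (2*N+1) / (1 - t ^ 2) ^ (N+2)))
      = C * (l ^ (2*N+2) / ((2*(N:ℝ)+2) * (1 - l ^ 2) ^ (N+1))) := by
    rw [intervalIntegral.integral_const_mul, haux]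
  have hRHS : C * (l ^ (2*N+2) / ((2*(N:ℝ)+2) * (1 - l ^ 2) ^ (N+1)))
      = l * poch (1/2) (N + 1) / (2 * ((N : ℝ) + 1) * (Nat.factorial (N + 1) : ℝ)) *
        (l ^ 2 * c / (1 - l ^ 2)) ^ (N + 1) := by
    rw [hC]
    have hpowe : (l ^ 2 * c / (1 - l ^ 2)) ^ (N + 1)
        = l ^ (2*N+2) * c ^ (N+1) / (1 - l ^ 2) ^ (N+1) := by
      rw [div_pow, mul_pow, ← pow_mul]
      congr 2
    rw [hpowe]
    have h2 : (2*(N:ℝ)+2) ≠ 0 := by positivity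
    have hlp : ((1:ℝ) - l ^ 2) ^ (N+1) ≠ 0 := pow_ne_zero _ (ne_of_gt hl2)
    have hfp : (Nat.factorial (N+1) : ℝ) ≠ 0 := Nat.cast_ne_zero.2 (Nat.factorial_ne_zero _)
    have hN1 : ((N:ℝ)+1) ≠ 0 := by positivity
    field_simp
  calc |∫ t in (0:ℝ)..l, (f t - ∑ j ∈ Finset.range (N+1), g j t)|
      ≤ ∫ t in (0:ℝ)..l, |f t - ∑ j ∈ Finset.range (N+1), g j t| := step1
    _ ≤ ∫ t in (0:ℝ)..l, C * (t ^ (2*N+1) / (1 - t ^ 2) ^ (N+2)) := step2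
    _ = C * (l ^ (2*N+2) / ((2*(N:ℝ)+2) * (1 - l ^ 2) ^ (N+1))) := step3
    _ = l * poch (1/2) (N + 1) / (2 * ((N : ℝ) + 1) * (Nat.factorial (N + 1) : ℝ)) *
        (l ^ 2 * c / (1 - l ^ 2)) ^ (N + 1) := hRHS
end

section
/- For every nonnegative integer n, the function F_n(x) = Σ_{m=0}^n ((−n)_m (1/2)_m / ((1)_m m!)) x^m is monotone non-increasing on the interval [0,1], and for every x ∈ [0,1] one has (1/2)_n/n! ≤ F_n(x) ≤ 1; moreover F_n(0) = 1 and F_n(1) = (1/2)_n/n!. -/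
open Real Finset

/-- Terminating Gauss hypergeometric function `₂F₁(-n, 1/2; 1; x)`. -/
noncomputable def F2F1 (n : ℕ) (x : ℝ) : ℝ :=
  ∑ m ∈ Finset.range (n + 1),
    poch (-(n : ℝ)) m * poch (1/2) m / (poch 1 m * (Nat.factorial m : ℝ)) * x ^ m

lemma poch_one (m : ℕ) : poch 1 m = (Nat.factorial m : ℝ) := by
  induction m with
  | zero => simp [poch]
  | succ k ih =>
      rw [poch, Finset.prod_range_succ, ← poch, ih]
      push_cast [Nat.factorial_succ]
      ring

lemma prod_half (m : ℕ) :
    (∏ i ∈ range m, (2 * (i : ℝ) + 1) / (2 * i + 2)) = poch (1/2) m / (Nat.factorial m : ℝ) := by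
  rw [← poch_one, poch, poch, ← Finset.prod_div_distrib]
  refine Finset.prod_congr rfl fun i _ => ?_
  have h1 : (1 : ℝ) + i ≠ 0 := by positivity
  have h2 : 2 * (i : ℝ) + 2 ≠ 0 := by positivity
  field_simp
  ring

lemma integral_sin_even (m : ℕ) :
    (∫ θ in (0:ℝ)..π, sin θ ^ (2 * m)) = π * (poch (1/2) m / (Nat.factorial m : ℝ)) := by
  rw [integral_sin_pow_even, prod_half]

lemma my_integral_cos_pow_even (n : ℕ) :
    (∫ x in (0:ℝ)..π, cos x ^ (2 * n)) = π * ∏ i ∈ range n, (2 * (i : ℝ) + 1) / (2 * i + 2) := by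
  induction' n with k ih
  · simp
  rw [prod_range_succ_comm, mul_left_comm, ← ih, Nat.mul_succ, integral_cos_pow]
  norm_cast
  field_simp
  simp

lemma poch_neg (n m : ℕ) (h : m ≤ n) :
    poch (-(n : ℝ)) m = (-1) ^ m * (n.choose m) * (Nat.factorial m : ℝ) := by
  induction m with
  | zero => simp [poch]
  | succ k ih =>
      have hk : k ≤ n := Nat.le_of_succ_le h
      rw [poch, Finset.prod_range_succ, ← poch, ih hk]
      have hcast : ((n - k : ℕ) : ℝ) = (n : ℝ) - k := by
        rw [Nat.cast_sub hk]
      have hchoose : (n.choose (k + 1) : ℝ) * (k + 1) = (n.choose k : ℝ) * ((n : ℝ) - k) := by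
        rw [← hcast]
        exact_mod_cast congrArg (Nat.cast : ℕ → ℝ) (Nat.choose_succ_right_eq n k)
      push_cast [Nat.factorial_succ]
      have : (-(n:ℝ) + k) = -((n:ℝ) - k) := by ring
      rw [this]
      rw [pow_succ]
      linear_combination ((-1:ℝ)^k * (Nat.factorial k : ℝ)) * hchoose

lemma F2F1_repr (n : ℕ) (x : ℝ) :
    F2F1 n x = (1 / π) * ∫ θ in (0:ℝ)..π, (1 - x * sin θ ^ 2) ^ n := by
  have expand : ∀ θ : ℝ, (1 - x * sin θ ^ 2) ^ n =
      ∑ m ∈ range (n + 1), (n.choose m : ℝ) * ((-x) ^ m * sin θ ^ (2 * m)) := by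
    intro θ
    rw [sub_eq_add_neg, add_comm, add_pow]
    refine Finset.sum_congr rfl fun m _ => ?_
    rw [one_pow, pow_mul, neg_pow, mul_pow]
    ring
  simp only [expand]
  rw [intervalIntegral.integral_finset_sum]
  · rw [Finset.mul_sum, F2F1]
    refine Finset.sum_congr rfl fun m hm => ?_
    have hm' : m ≤ n := Nat.lt_succ_iff.mp (Finset.mem_range.mp hm)
    rw [intervalIntegral.integral_const_mul, intervalIntegral.integral_const_mul,
      integral_sin_even, poch_neg n m hm', poch_one]
    have hπ : (π : ℝ) ≠ 0 := pi_ne_zero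
    have hf : (Nat.factorial m : ℝ) ≠ 0 := Nat.cast_ne_zero.mpr m.factorial_ne_zero
    rw [neg_pow]
    field_simp
    ring
  · intro m _
    exact (Continuous.intervalIntegrable (by continuity) 0 π)

lemma integrable_aux (n : ℕ) (x : ℝ) :
    IntervalIntegrable (fun θ => (1 - x * sin θ ^ 2) ^ n) MeasureTheory.volume 0 π :=
  Continuous.intervalIntegrable (by continuity) 0 π

theorem stmt4 (n : ℕ) :
    AntitoneOn (F2F1 n) (Set.Icc 0 1)
    ∧ (∀ x ∈ Set.Icc (0:ℝ) 1,
        poch (1/2) n / (Nat.factorial n : ℝ) ≤ F2F1 n x ∧ F2F1 n x ≤ 1)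
    ∧ F2F1 n 0 = 1
    ∧ F2F1 n 1 = poch (1/2) n / (Nat.factorial n : ℝ) := by
  have hanti : AntitoneOn (F2F1 n) (Set.Icc 0 1) := by
    intro x hx y hy hxy
    rw [F2F1_repr, F2F1_repr]
    have hπ : (0:ℝ) ≤ 1 / π := by positivity
    refine mul_le_mul_of_nonneg_left ?_ hπ
    refine intervalIntegral.integral_mono_on pi_pos.le (integrable_aux n y) (integrable_aux n x)
      fun θ _ => ?_
    have hs0 : (0:ℝ) ≤ sin θ ^ 2 := sq_nonneg _
    have hs1 : sin θ ^ 2 ≤ 1 := sin_sq_le_one θ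
    have h1 : 0 ≤ 1 - y * sin θ ^ 2 := by nlinarith [hy.1, hy.2]
    have h2 : 1 - y * sin θ ^ 2 ≤ 1 - x * sin θ ^ 2 := by nlinarith [hx.1]
    exact pow_le_pow_left₀ h1 h2 n
  have h0 : F2F1 n 0 = 1 := by
    rw [F2F1_repr]
    simp [pi_ne_zero]
  have h1 : F2F1 n 1 = poch (1/2) n / (Nat.factorial n : ℝ) := by
    rw [F2F1_repr]
    have : ∀ θ : ℝ, (1 - 1 * sin θ ^ 2) ^ n = cos θ ^ (2 * n) := by
      intro θ
      rw [pow_mul, cos_sq']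
      ring_nf
    simp only [this]
    rw [my_integral_cos_pow_even, prod_half]
    field_simp
  refine ⟨hanti, fun x hx => ?_, h0, h1⟩
  constructor
  · rw [← h1]
    exact hanti hx (by constructor <;> norm_num) hx.2
  · rw [← h0]
    exact hanti (by constructor <;> norm_num) hx hx.1
end

section
/- For every even positive integer n, the function F_n(x) = Σ_{m=0}^n ((−n)_m (1/2)_m / ((1)_m m!)) x^m has a unique minimum point x_min in the open interval (1,2) (that is, F_n is strictly decreasing on [1, x_min] and strictly increasing on [x_min, 2]), and for every x ∈ [1,2] one has 0 < F_n(x) ≤ F_n(2) = n!/(2^n·((n/2)!)²) ≤ 1. -/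
open Real Finset intervalIntegral

noncomputable def Pp (p n : ℕ) (x : ℝ) : ℝ :=
  ∑ m ∈ Finset.range (n + 1),
    (-1) ^ m * (n.choose m : ℝ) * ((m + p).centralBinom : ℝ) / 4 ^ (m + p) * x ^ m




lemma cos_moment (m : ℕ) :
    ∫ θ in (0:ℝ)..(2 * π), cos θ ^ (2 * m) = 2 * π * (m.centralBinom : ℝ) / 4 ^ m := by
  induction m with
  | zero => simp
  | succ k ih =>
    have h : 2 * (k + 1) = 2 * k + 2 := by ring
    rw [h, integral_cos_pow, ih, Real.sin_two_pi, Real.sin_zero]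
    have key : ((k : ℝ) + 1) * ((k + 1).centralBinom : ℝ)
        = 2 * (2 * k + 1) * (k.centralBinom : ℝ) := by
      exact_mod_cast Nat.succ_mul_centralBinom_succ k
    have h4 : (4 : ℝ) ^ (k + 1) = 4 * 4 ^ k := by ring
    have hk2 : ((2:ℝ) * k + 2) ≠ 0 := by positivity
    have h4k : (4:ℝ) ^ k ≠ 0 := by positivity
    field_simp
    push_cast
    linear_combination (-4 * π * (4:ℝ) ^ k) * key

lemma sin_moment (m : ℕ) :
    ∫ θ in (0:ℝ)..(2 * π), sin θ ^ (2 * m) = 2 * π * (m.centralBinom : ℝ) / 4 ^ m := by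
  induction m with
  | zero => simp
  | succ k ih =>
    have h : 2 * (k + 1) = 2 * k + 2 := by ring
    rw [h, integral_sin_pow, ih, Real.sin_two_pi, Real.sin_zero]
    have key : ((k : ℝ) + 1) * ((k + 1).centralBinom : ℝ)
        = 2 * (2 * k + 1) * (k.centralBinom : ℝ) := by
      exact_mod_cast Nat.succ_mul_centralBinom_succ k
    field_simp
    push_cast
    linear_combination (-4 * π * (4:ℝ) ^ k) * key

lemma cos_moment_odd (m : ℕ) :
    ∫ θ in (0:ℝ)..(2 * π), cos θ ^ (2 * m + 1) = 0 := by
  induction m with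
  | zero => simp
  | succ k ih =>
    have h : 2 * (k + 1) + 1 = 2 * k + 1 + 2 := by ring
    rw [h, integral_cos_pow, ih, Real.sin_two_pi]
    simp






lemma Pp_rep (p n : ℕ) (x : ℝ) :
    ∫ θ in (0:ℝ)..(2 * π), cos θ ^ (2 * p) * (1 - x * cos θ ^ 2) ^ n
      = 2 * π * Pp p n x := by
  have hexp : ∀ θ : ℝ, cos θ ^ (2 * p) * (1 - x * cos θ ^ 2) ^ n
      = ∑ m ∈ Finset.range (n + 1),
          ((-1) ^ m * (n.choose m : ℝ) * x ^ m) * cos θ ^ (2 * (m + p)) := by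
    intro θ
    have : (1 - x * cos θ ^ 2) ^ n = ((-(x * cos θ ^ 2)) + 1) ^ n := by ring_nf
    rw [this, add_pow, Finset.mul_sum]
    refine Finset.sum_congr rfl fun m _ => ?_
    have h1 : (-(x * cos θ ^ 2)) ^ m = (-1) ^ m * x ^ m * (cos θ ^ 2) ^ m := by
      rw [neg_pow]; ring
    rw [h1]
    rw [show 2 * (m + p) = 2 * p + 2 * m by ring, pow_add, ← pow_mul]
    ring
  simp_rw [hexp]
  rw [intervalIntegral.integral_finset_sum]
  · unfold Pp
    rw [Finset.mul_sum]
    refine Finset.sum_congr rfl fun m _ => ?_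
    rw [intervalIntegral.integral_const_mul, cos_moment]
    ring
  · intro m _
    apply Continuous.intervalIntegrable
    fun_prop

lemma integral_pos_aux {f : ℝ → ℝ} (hc : Continuous f) (h0 : ∀ θ, 0 ≤ f θ)
    (hp : ∀ θ ∈ Set.Ioo (π / 3) (5 * π / 12), 0 < f θ) :
    0 < ∫ θ in (0:ℝ)..(2 * π), f θ := by
  have hπ := Real.pi_pos
  have h1 : (0:ℝ) < π / 3 := by linarith
  have h2 : π / 3 < 5 * π / 12 := by linarith
  have h3 : 5 * π / 12 < 2 * π := by linarith
  have hi : ∀ a b : ℝ, IntervalIntegrable f MeasureTheory.volume a b :=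
    fun a b => hc.intervalIntegrable a b
  rw [← intervalIntegral.integral_add_adjacent_intervals (hi 0 (π/3)) (hi (π/3) (2*π)),
    ← intervalIntegral.integral_add_adjacent_intervals (hi (π/3) (5*π/12)) (hi (5*π/12) (2*π))]
  have A : 0 ≤ ∫ θ in (0:ℝ)..(π/3), f θ :=
    intervalIntegral.integral_nonneg h1.le (fun u _ => h0 u)
  have B : 0 < ∫ θ in (π/3)..(5*π/12), f θ :=
    intervalIntegral.intervalIntegral_pos_of_pos_on (hi _ _) hp h2
  have C : 0 ≤ ∫ θ in (5*π/12)..(2*π), f θ :=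
    intervalIntegral.integral_nonneg h3.le (fun u _ => h0 u)
  linarith

lemma cos_bounds {θ : ℝ} (hθ : θ ∈ Set.Ioo (π / 3) (5 * π / 12)) :
    0 < cos θ ∧ cos θ < 1 / 2 := by
  have hπ := Real.pi_pos
  obtain ⟨h1, h2⟩ := hθ
  constructor
  · apply Real.cos_pos_of_mem_Ioo
    constructor <;> [linarith; linarith]
  · have : cos θ < cos (π/3) := Real.strictAntiOn_cos
      ⟨by linarith, by linarith⟩ ⟨by linarith, by linarith⟩ h1
    rwa [Real.cos_pi_div_three] at this

lemma Pp_pos (p n : ℕ) (hn : Even n) {x : ℝ} (hx0 : 0 ≤ x) (hx2 : x ≤ 2) :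
    0 < Pp p n x := by
  have hπ := Real.pi_pos
  have h := Pp_rep p n x
  have hpos : 0 < ∫ θ in (0:ℝ)..(2 * π), cos θ ^ (2 * p) * (1 - x * cos θ ^ 2) ^ n := by
    apply integral_pos_aux
    · fun_prop
    · intro θ
      exact mul_nonneg ((even_two_mul p).pow_nonneg _) (hn.pow_nonneg _)
    · intro θ hθ
      obtain ⟨hc0, hc2⟩ := cos_bounds hθ
      have hcsq : cos θ ^ 2 < 1 / 4 := by nlinarith
      apply mul_pos (pow_pos hc0 _)
      apply pow_pos
      nlinarith
  rw [h] at hpos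
  nlinarith

lemma Pp_pos_one (p n : ℕ) : 0 < Pp p n 1 := by
  have hπ := Real.pi_pos
  have h := Pp_rep p n 1
  have hpos : 0 < ∫ θ in (0:ℝ)..(2 * π), cos θ ^ (2 * p) * (1 - 1 * cos θ ^ 2) ^ n := by
    apply integral_pos_aux
    · fun_prop
    · intro θ
      have : (1 : ℝ) - 1 * cos θ ^ 2 = sin θ ^ 2 := by
        have := Real.sin_sq_add_cos_sq θ; linarith
      rw [this]
      exact mul_nonneg ((even_two_mul p).pow_nonneg _) (pow_nonneg (sq_nonneg _) _)
    · intro θ hθ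
      obtain ⟨hc0, hc2⟩ := cos_bounds hθ
      have hs : 0 < sin θ := by
        apply Real.sin_pos_of_pos_of_lt_pi <;> [nlinarith [hθ.1, Real.pi_pos]; nlinarith [hθ.2, Real.pi_pos]]
      have : (1 : ℝ) - 1 * cos θ ^ 2 = sin θ ^ 2 := by
        have := Real.sin_sq_add_cos_sq θ; linarith
      rw [this]
      exact mul_pos (pow_pos hc0 _) (pow_pos (by positivity) _)
  rw [h] at hpos
  nlinarith








lemma hasDerivAt_Pp (p n : ℕ) (x : ℝ) :
    HasDerivAt (Pp p (n + 1)) (-((n : ℝ) + 1) * Pp (p + 1) n x) x := by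
  have H : HasDerivAt (Pp p (n + 1))
      (∑ m ∈ Finset.range (n + 2),
        (-1) ^ m * ((n+1).choose m : ℝ) * ((m + p).centralBinom : ℝ) / 4 ^ (m + p)
          * (m * x ^ (m - 1))) x := by
    apply HasDerivAt.fun_sum
    intro m _
    exact (hasDerivAt_pow m x).const_mul _
  convert H using 1
  rw [Finset.sum_range_succ']
  simp only [Nat.cast_zero, pow_zero, zero_mul, mul_zero, add_zero]
  unfold Pp
  rw [neg_mul, Finset.mul_sum, ← Finset.sum_neg_distrib]
  refine Finset.sum_congr rfl fun k _ => ?_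
  have hk : (((n + 1).choose (k + 1) : ℝ)) * ((k : ℝ) + 1) = ((n : ℝ) + 1) * (n.choose k : ℝ) := by
    exact_mod_cast (Nat.add_one_mul_choose_eq n k).symm
  rw [show k + (p + 1) = k + 1 + p from by omega]
  simp only [Nat.add_sub_cancel]
  push_cast
  linear_combination ((-1 : ℝ) ^ k * ((k + 1 + p).centralBinom : ℝ) / 4 ^ (k + 1 + p) * x ^ k) * hk

lemma poch_one_eq (m : ℕ) : poch 1 m = (m.factorial : ℝ) := by
  induction m with
  | zero => simp [poch]
  | succ k ih =>
    rw [poch, Finset.prod_range_succ, ← poch, ih, Nat.factorial_succ]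
    push_cast; ring

lemma poch_half_eq (m : ℕ) :
    poch (1/2) m = (m.centralBinom : ℝ) * (m.factorial : ℝ) / 4 ^ m := by
  induction m with
  | zero => simp [poch]
  | succ k ih =>
    rw [poch, Finset.prod_range_succ, ← poch, ih, Nat.factorial_succ]
    have key : ((k : ℝ) + 1) * ((k + 1).centralBinom : ℝ)
        = 2 * (2 * k + 1) * (k.centralBinom : ℝ) := by
      exact_mod_cast Nat.succ_mul_centralBinom_succ k
    have h4 : (4:ℝ) ^ k ≠ 0 := by positivity
    field_simp
    push_cast
    linear_combination (-2 * (4:ℝ) ^ k * (k.factorial : ℝ)) * key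

lemma poch_neg_eq (n m : ℕ) (h : m ≤ n) :
    poch (-(n : ℝ)) m = (-1) ^ m * (n.factorial : ℝ) / ((n - m).factorial : ℝ) := by
  induction m with
  | zero =>
    simp only [poch, Finset.range_zero, Finset.prod_empty, pow_zero, one_mul, Nat.sub_zero]
    rw [div_self (Nat.cast_ne_zero.2 (Nat.factorial_ne_zero n))]
  | succ k ih =>
    have hk : k ≤ n := Nat.le_of_succ_le h
    rw [poch, Finset.prod_range_succ, ← poch, ih hk]
    have h1 : n - k = (n - (k+1)) + 1 := by omega
    have h3 : ((n - k : ℕ) : ℝ) = (n : ℝ) - k := by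
      push_cast [Nat.cast_sub hk]; ring
    have h2 : ((n - k).factorial : ℝ) = ((n : ℝ) - k) * ((n - (k+1)).factorial : ℝ) := by
      rw [← h3, h1, Nat.factorial_succ, ← h1]
      push_cast
      ring
    have hnk : ((n - (k+1)).factorial : ℝ) ≠ 0 := Nat.cast_ne_zero.2 (Nat.factorial_ne_zero _)
    have hne : ((n : ℝ) - k) ≠ 0 := by
      have : (k : ℝ) + 1 ≤ n := by exact_mod_cast h
      linarith
    rw [h2]
    field_simp
    ring












lemma F2F1_eq_Pp (n : ℕ) : F2F1 n = Pp 0 n := by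
  funext x
  unfold F2F1 Pp
  refine Finset.sum_congr rfl fun m hm => ?_
  have hmn : m ≤ n := Nat.lt_succ_iff.mp (Finset.mem_range.mp hm)
  rw [poch_one_eq, poch_half_eq, poch_neg_eq n m hmn, Nat.add_zero]
  have hch : (n.choose m : ℝ) = (n.factorial : ℝ) / ((m.factorial : ℝ) * ((n - m).factorial : ℝ)) := by
    rw [Nat.cast_choose ℝ hmn]
  have f1 : ((m.factorial : ℝ)) ≠ 0 := Nat.cast_ne_zero.2 (Nat.factorial_ne_zero _)
  have f2 : (((n - m).factorial : ℝ)) ≠ 0 := Nat.cast_ne_zero.2 (Nat.factorial_ne_zero _)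
  have f3 : ((4:ℝ)) ^ m ≠ 0 := by positivity
  rw [hch]
  field_simp

lemma double_angle (j : ℕ) :
    ∫ θ in (0:ℝ)..(2 * π), cos (2 * θ) ^ j = ∫ u in (0:ℝ)..(2 * π), cos u ^ j := by
  have h2 : (2:ℝ) ≠ 0 := two_ne_zero
  have hcomp := intervalIntegral.integral_comp_mul_left (a := (0:ℝ)) (b := 2*π)
    (f := fun u => cos u ^ j) (c := (2:ℝ)) h2
  rw [hcomp]
  have hper : Function.Periodic (fun u : ℝ => cos u ^ j) (2 * π) :=
    (Real.cos_periodic).comp (· ^ j)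
  have hint : ∀ t₁ t₂ : ℝ, IntervalIntegrable (fun u : ℝ => cos u ^ j)
      MeasureTheory.volume t₁ t₂ := fun t₁ t₂ => (Continuous.intervalIntegrable (by fun_prop) _ _)
  have := hper.intervalIntegral_add_zsmul_eq 2 0 hint
  have he : (0:ℝ) + (2:ℤ) • (2 * π) = 2 * (2 * π) := by
    rw [zsmul_eq_mul]; push_cast; ring
  rw [he] at this
  rw [mul_zero, this, zero_add]
  rw [zsmul_eq_mul]
  push_cast
  rw [smul_eq_mul]
  ring






lemma Pp_two (k : ℕ) : Pp 0 (2 * k) 2 = (k.centralBinom : ℝ) / 4 ^ k := by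
  have hπ := Real.pi_pos
  have h := Pp_rep 0 (2 * k) 2
  have hint : ∀ θ : ℝ, cos θ ^ (2 * 0) * (1 - 2 * cos θ ^ 2) ^ (2 * k) = cos (2 * θ) ^ (2 * k) := by
    intro θ
    have hc : cos (2 * θ) = 2 * cos θ ^ 2 - 1 := Real.cos_two_mul θ
    rw [hc]
    rw [show (1 - 2 * cos θ ^ 2) = -(2 * cos θ ^ 2 - 1) by ring, neg_pow, Even.neg_one_pow (even_two_mul k)]
    ring
  rw [show (∫ θ in (0:ℝ)..(2 * π), cos θ ^ (2 * 0) * (1 - 2 * cos θ ^ 2) ^ (2 * k))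
      = ∫ θ in (0:ℝ)..(2 * π), cos (2 * θ) ^ (2 * k) from by simp_rw [hint]] at h
  rw [double_angle, cos_moment] at h
  have h' : (2*π) * ((k.centralBinom : ℝ)/4^k) = (2*π) * Pp 0 (2*k) 2 := by
    rw [← h]; ring
  exact (mul_left_cancel₀ (by positivity) h').symm

lemma Pp_one_two_neg (k : ℕ) : Pp 1 (2 * k + 1) 2 < 0 := by
  have hπ := Real.pi_pos
  have h := Pp_rep 1 (2 * k + 1) 2
  have hint : ∀ θ : ℝ, cos θ ^ (2 * 1) * (1 - 2 * cos θ ^ 2) ^ (2 * k + 1)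
      = -(1/2) * cos (2 * θ) ^ (2 * k + 1) - (1/2) * cos (2 * θ) ^ (2 * (k + 1)) := by
    intro θ
    have hc : cos (2 * θ) = 2 * cos θ ^ 2 - 1 := Real.cos_two_mul θ
    have hodd : (1 - 2 * cos θ ^ 2) ^ (2 * k + 1) = -((2 * cos θ ^ 2 - 1) ^ (2 * k + 1)) := by
      rw [show (1 - 2 * cos θ ^ 2) = -(2 * cos θ ^ 2 - 1) by ring, neg_pow,
        Odd.neg_one_pow ⟨k, by ring⟩]
      ring
    rw [hc, hodd, show 2 * (k + 1) = (2 * k + 1) + 1 by ring, pow_succ]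
    ring
  rw [show (∫ θ in (0:ℝ)..(2 * π), cos θ ^ (2 * 1) * (1 - 2 * cos θ ^ 2) ^ (2 * k + 1))
      = ∫ θ in (0:ℝ)..(2 * π), (-(1/2) * cos (2 * θ) ^ (2 * k + 1) - (1/2) * cos (2 * θ) ^ (2 * (k + 1)))
      from by simp_rw [hint]] at h
  rw [intervalIntegral.integral_sub (by apply Continuous.intervalIntegrable; fun_prop)
    (by apply Continuous.intervalIntegrable; fun_prop),
    intervalIntegral.integral_const_mul, intervalIntegral.integral_const_mul,
    double_angle, double_angle, cos_moment_odd, cos_moment] at h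
  have hcb : (0:ℝ) < ((k+1).centralBinom : ℝ) / 4 ^ (k + 1) := by
    have := (k+1).centralBinom_pos
    positivity
  have h' : (2*π) * (-(1/2) * (((k+1).centralBinom : ℝ)/4^(k+1))) = (2*π) * Pp 1 (2*k+1) 2 := by
    rw [← h]; ring
  have := mul_left_cancel₀ (show (2*π:ℝ) ≠ 0 by positivity) h'
  rw [← this]
  nlinarith

lemma Pp_one_val (n : ℕ) : Pp 0 n 1 = (n.centralBinom : ℝ) / 4 ^ n := by
  have hπ := Real.pi_pos
  have h := Pp_rep 0 n 1
  have hint : ∀ θ : ℝ, cos θ ^ (2 * 0) * (1 - 1 * cos θ ^ 2) ^ n = sin θ ^ (2 * n) := by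
    intro θ
    have : (1 : ℝ) - 1 * cos θ ^ 2 = sin θ ^ 2 := by
      have := Real.sin_sq_add_cos_sq θ; linarith
    rw [this, ← pow_mul]
    ring_nf
  rw [show (∫ θ in (0:ℝ)..(2 * π), cos θ ^ (2 * 0) * (1 - 1 * cos θ ^ 2) ^ n)
      = ∫ θ in (0:ℝ)..(2 * π), sin θ ^ (2 * n) from by simp_rw [hint], sin_moment] at h
  have h' : (2*π) * ((n.centralBinom : ℝ)/4^n) = (2*π) * Pp 0 n 1 := by
    rw [← h]; ring
  exact (mul_left_cancel₀ (by positivity) h').symm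

lemma cb_vandermonde (k : ℕ) : (2 * k).centralBinom ≤ 4 ^ k * k.centralBinom := by
  have h1 : (2 * k).centralBinom = (2 * k + 2 * k).choose (2 * k) := by
    rw [Nat.centralBinom_eq_two_mul_choose]
    congr 1
    omega
  rw [h1, Nat.add_choose_eq]
  calc ∑ ij ∈ Finset.HasAntidiagonal.antidiagonal (2 * k), (2 * k).choose ij.1 * (2 * k).choose ij.2
      ≤ ∑ ij ∈ Finset.HasAntidiagonal.antidiagonal (2 * k), (2 * k).choose ij.1 * k.centralBinom := by
        apply Finset.sum_le_sum
        intro ij _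
        exact Nat.mul_le_mul_left _ (by
          have := Nat.choose_le_middle ij.2 (2 * k)
          rwa [Nat.mul_div_cancel_left k (by norm_num : 0 < 2), ← Nat.centralBinom_eq_two_mul_choose] at this)
    _ = (∑ ij ∈ Finset.HasAntidiagonal.antidiagonal (2 * k), (2 * k).choose ij.1) * k.centralBinom := by
        rw [Finset.sum_mul]
    _ = 4 ^ k * k.centralBinom := by
        congr 1
        rw [Finset.Nat.sum_antidiagonal_eq_sum_range_succ_mk]
        rw [Nat.sum_range_choose]
        rw [show 2 ^ (2 * k) = 4 ^ k by rw [pow_mul]; norm_num]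

lemma cb_le_four_pow (k : ℕ) : k.centralBinom ≤ 4 ^ k := by
  rw [Nat.centralBinom_eq_two_mul_choose]
  calc (2 * k).choose k ≤ ∑ i ∈ Finset.range (2 * k + 1), (2 * k).choose i :=
        Finset.single_le_sum (fun i _ => Nat.zero_le _) (Finset.mem_range.mpr (by omega))
    _ = 2 ^ (2 * k) := Nat.sum_range_choose (2 * k)
    _ = 4 ^ k := by rw [pow_mul]; norm_num


















theorem stmt6 (n : ℕ) (heven : Even n) (hpos : 0 < n) :
    (∃ xmin ∈ Set.Ioo (1:ℝ) 2,
        StrictAntiOn (F2F1 n) (Set.Icc 1 xmin) ∧ StrictMonoOn (F2F1 n) (Set.Icc xmin 2))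
    ∧ (∀ x ∈ Set.Icc (1:ℝ) 2, 0 < F2F1 n x ∧ F2F1 n x ≤ F2F1 n 2)
    ∧ F2F1 n 2 = (Nat.factorial n : ℝ) / (2 ^ n * ((Nat.factorial (n / 2) : ℝ)) ^ 2)
    ∧ F2F1 n 2 ≤ 1 := by
  obtain ⟨k, hk⟩ := heven
  have hk2 : n = 2 * k := by omega
  have hk1 : 1 ≤ k := by omega
  have hn2 : 2 ≤ n := by omega
  have hF : F2F1 n = Pp 0 n := F2F1_eq_Pp n
  set f' : ℝ → ℝ := fun x => -(n : ℝ) * Pp 1 (n - 1) x with hf'def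
  -- derivative of F
  have hcast1 : ((n - 1 : ℕ) : ℝ) + 1 = (n : ℝ) := by
    have : (1:ℕ) ≤ n := hpos
    push_cast [Nat.cast_sub this]; ring
  have hcast2 : ((n - 2 : ℕ) : ℝ) + 1 = (n : ℝ) - 1 := by
    push_cast [Nat.cast_sub hn2]; ring
  have hd : ∀ x : ℝ, HasDerivAt (F2F1 n) (f' x) x := by
    intro x
    have h := hasDerivAt_Pp 0 (n - 1) x
    rw [show n - 1 + 1 = n from by omega] at h
    rw [hF, hf'def]
    simpa [hcast1] using h
  have hd2 : ∀ x : ℝ, HasDerivAt f' ((n : ℝ) * ((n : ℝ) - 1) * Pp 2 (n - 2) x) x := by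
    intro x
    have h := (hasDerivAt_Pp 1 (n - 2) x).const_mul (-(n : ℝ))
    rw [show n - 2 + 1 = n - 1 from by omega] at h
    have : -(n : ℝ) * (-(((n - 2 : ℕ) : ℝ) + 1) * Pp 2 (n - 2) x)
        = (n : ℝ) * ((n : ℝ) - 1) * Pp 2 (n - 2) x := by
      rw [hcast2]; ring
    rw [this] at h
    exact h
  have heven2 : Even (n - 2) := ⟨k - 1, by omega⟩
  -- f' is strictly monotone on [1,2]
  have hf'cont : ContinuousOn f' (Set.Icc (1:ℝ) 2) :=
    fun x _ => (hd2 x).continuousAt.continuousWithinAt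
  have hf'mono : StrictMonoOn f' (Set.Icc (1:ℝ) 2) := by
    apply strictMonoOn_of_deriv_pos (convex_Icc 1 2) hf'cont
    intro x hx
    rw [interior_Icc] at hx
    rw [(hd2 x).deriv]
    have hp : 0 < Pp 2 (n - 2) x := Pp_pos 2 (n - 2) heven2 (by linarith [hx.1]) (le_of_lt hx.2)
    have h1n : (1:ℝ) < (n:ℝ) := by exact_mod_cast hn2
    exact mul_pos (mul_pos (by linarith) (by linarith)) hp
  have hf'1 : f' 1 < 0 := by
    have := Pp_pos_one 1 (n - 1)
    have hn0 : (0:ℝ) < (n:ℝ) := by exact_mod_cast hpos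
    show -(n:ℝ) * Pp 1 (n - 1) 1 < 0
    exact mul_neg_of_neg_of_pos (by linarith) this
  have hf'2 : 0 < f' 2 := by
    have h := Pp_one_two_neg (k - 1)
    rw [show 2 * (k - 1) + 1 = n - 1 from by omega] at h
    have hn0 : (0:ℝ) < (n:ℝ) := by exact_mod_cast hpos
    show 0 < -(n:ℝ) * Pp 1 (n - 1) 2
    exact mul_pos_of_neg_of_neg (by linarith) h
  -- IVT for f'
  obtain ⟨xmin, hxmem, hxval⟩ : ∃ x ∈ Set.Ioo (1:ℝ) 2, f' x = 0 := by
    have hsub := intermediate_value_Ioo (le_of_lt one_lt_two) hf'cont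
    have : (0:ℝ) ∈ Set.Ioo (f' 1) (f' 2) := ⟨hf'1, hf'2⟩
    obtain ⟨x, hx, hfx⟩ := hsub this
    exact ⟨x, hx, hfx⟩
  have hx1 : (1:ℝ) < xmin := hxmem.1
  have hx2 : xmin < 2 := hxmem.2
  have hFcont : ∀ s : Set ℝ, ContinuousOn (F2F1 n) s :=
    fun s x _ => (hd x).continuousAt.continuousWithinAt
  -- strict antitone on [1, xmin]
  have hanti : StrictAntiOn (F2F1 n) (Set.Icc 1 xmin) := by
    apply strictAntiOn_of_deriv_neg (convex_Icc 1 xmin) (hFcont _)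
    intro x hx
    rw [interior_Icc] at hx
    rw [(hd x).deriv]
    have hlt : f' x < f' xmin :=
      hf'mono ⟨hx.1.le, by linarith [hx.2]⟩ ⟨hx1.le, hx2.le⟩ hx.2
    rw [hxval] at hlt
    exact hlt
  -- strict mono on [xmin, 2]
  have hmono : StrictMonoOn (F2F1 n) (Set.Icc xmin 2) := by
    apply strictMonoOn_of_deriv_pos (convex_Icc xmin 2) (hFcont _)
    intro x hx
    rw [interior_Icc] at hx
    rw [(hd x).deriv]
    have hlt : f' xmin < f' x :=
      hf'mono ⟨hx1.le, hx2.le⟩ ⟨by linarith [hx.1], hx.2.le⟩ hx.1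
    rw [hxval] at hlt
    exact hlt
  -- value at 2
  have hF2 : F2F1 n 2 = (k.centralBinom : ℝ) / 4 ^ k := by
    rw [hF, hk2, Pp_two]
  -- value at 1
  have hF1 : F2F1 n 1 = (n.centralBinom : ℝ) / 4 ^ n := by
    rw [hF, Pp_one_val]
  have hF1leF2 : F2F1 n 1 ≤ F2F1 n 2 := by
    rw [hF1, hF2]
    rw [div_le_div_iff₀ (by positivity) (by positivity)]
    have hv : ((2 * k).centralBinom : ℝ) ≤ 4 ^ k * (k.centralBinom : ℝ) := by
      exact_mod_cast cb_vandermonde k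
    have h4 : (4:ℝ) ^ n = 4 ^ k * 4 ^ k := by
      rw [hk2, two_mul, pow_add]
    rw [hk2] at *
    calc ((2 * k).centralBinom : ℝ) * 4 ^ k ≤ (4 ^ k * (k.centralBinom : ℝ)) * 4 ^ k := by
          exact mul_le_mul_of_nonneg_right hv (by positivity)
      _ = (k.centralBinom : ℝ) * 4 ^ (2 * k) := by
          rw [two_mul, pow_add]; ring
  refine ⟨⟨xmin, hxmem, hanti, hmono⟩, ?_, ?_, ?_⟩
  · intro x hx
    constructor
    · rw [hF]
      exact Pp_pos 0 n (⟨k, hk⟩) (by linarith [hx.1]) hx.2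
    · rcases le_total x xmin with hle | hle
      · have h1 : F2F1 n x ≤ F2F1 n 1 := by
          rcases eq_or_lt_of_le hx.1 with heq | hlt
          · rw [← heq]
          · exact (hanti ⟨le_refl 1, by linarith⟩ ⟨hx.1, hle⟩ hlt).le
        linarith
      · rcases eq_or_lt_of_le hx.2 with heq | hlt
        · rw [heq]
        · exact (hmono ⟨hle, hx.2⟩ ⟨hx2.le, le_refl 2⟩ hlt).le
  · rw [hF2]
    have hnd2 : n / 2 = k := by omega
    rw [hnd2, hk2]
    rw [Nat.centralBinom_eq_two_mul_choose, Nat.cast_choose ℝ (by omega : k ≤ 2 * k)]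
    rw [show 2 * k - k = k from by omega]
    rw [show (2:ℝ) ^ (2 * k) = 4 ^ k from by rw [pow_mul]; norm_num]
    rw [sq]
    ring
  · rw [hF2]
    have h := cb_le_four_pow k
    have : (k.centralBinom : ℝ) ≤ 4 ^ k := by exact_mod_cast h
    rw [div_le_one (by positivity)]
    exact this
end
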